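/- In the down-up algebra D(0,1), let R denote the k-span of the images of all words w in the free monoid on {u,d} with φ(w) = e (equivalently, R = k[(du)², (ud)², d⁴, u²]). Then the k-span of the images of all words w with φ(w) = ρ equals u·R = {u·a : a ∈ R}, and the k-span of the images of all words w with φ(w) = ρ² equals u²·R; in particular, these components are free right R-modules of rank 1 generated by u and u² respectively. -/

import Mathlib

open FreeAlgebra

noncomputable section

/-- The defining relations of the down-up algebra `D(a,b)` (with `u = ι k 0`, `d = ι k 1`). -/
inductive DownUpRel (k : Type*) [CommRing k] (a b : k) :
    FreeAlgebra k (Fin 2) → FreeAlgebra k (Fin 2) → Prop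
  | rel1 : DownUpRel k a b (ι k 0 * ι k 0 * ι k 1)
      (a • (ι k 0 * ι k 1 * ι k 0) + b • (ι k 1 * ι k 0 * ι k 0))
  | rel2 : DownUpRel k a b (ι k 0 * ι k 1 * ι k 1)
      (a • (ι k 1 * ι k 0 * ι k 1) + b • (ι k 1 * ι k 1 * ι k 0))

/-- The down-up algebra `D(a,b)`. -/
abbrev DownUp (k : Type*) [CommRing k] (a b : k) : Type _ :=
  RingQuot (DownUpRel k a b)

/-- The generator `u` of the down-up algebra. -/
def DownUp.u (k : Type*) [CommRing k] (a b : k) : DownUp k a b :=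
  RingQuot.mkAlgHom k (DownUpRel k a b) (ι k 0)

/-- The generator `d` of the down-up algebra. -/
def DownUp.d (k : Type*) [CommRing k] (a b : k) : DownUp k a b :=
  RingQuot.mkAlgHom k (DownUpRel k a b) (ι k 1)

/-- The image in `D(a,b)` of a word in the free monoid on the generators `u, d`. -/
def DownUp.wordVal (k : Type*) [CommRing k] (a b : k) :
    FreeMonoid (Fin 2) →* DownUp k a b :=
  FreeMonoid.lift fun i => RingQuot.mkAlgHom k (DownUpRel k a b) (ι k i)

/-- The degree-`n` component of the down-up algebra: the `k`-span of the images of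
all words of length `n` in `u` and `d`. -/
def DownUp.degComp (k : Type*) [CommRing k] (a b : k) (n : ℕ) :
    Submodule k (DownUp k a b) :=
  Submodule.span k {z | ∃ w : FreeMonoid (Fin 2), w.length = n ∧ DownUp.wordVal k a b w = z}

/-- The monoid homomorphism `φ` from the free monoid on `{u, d}` to the dihedral group
`D₈` of order 8 sending `u ↦ ρ` (the rotation of order 4) and `d ↦ r` (a reflection). -/
def phiD8 : FreeMonoid (Fin 2) →* DihedralGroup 4 :=
  FreeMonoid.lift fun i =>
    if i = 0 then DihedralGroup.r 1 else DihedralGroup.sr 0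

/-- The `g`-component of the `D₈`-grading of `D(0,1)`: the `k`-span of the images of
all words `w` in `u, d` with `φ(w) = g`. -/
def D8comp (k : Type*) [CommRing k] (g : DihedralGroup 4) :
    Submodule k (DownUp k 0 1) :=
  Submodule.span k
    {z | ∃ w : FreeMonoid (Fin 2), phiD8 w = g ∧ DownUp.wordVal k 0 1 w = z}


namespace DU18
open DihedralGroup

/-- identity map `ZMod 0 → ℤ` -/
def zi (n : ZMod 0) : ℤ := n

@[simp] lemma zi_add (a b : ZMod 0) : zi (a + b) = zi a + zi b := rfl
@[simp] lemma zi_sub (a b : ZMod 0) : zi (a - b) = zi a - zi b := rfl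
@[simp] lemma zi_one : zi 1 = 1 := rfl
@[simp] lemma zi_zero : zi 0 = 0 := rfl
lemma zi_inj {a b : ZMod 0} (h : zi a = zi b) : a = b := h

/-- alternating word `(ud)^n` -/
def udL : ℕ → List (Fin 2)
  | 0 => []
  | n+1 => 0 :: 1 :: udL n

/-- alternating word `(du)^n` -/
def duL : ℕ → List (Fin 2)
  | 0 => []
  | n+1 => 1 :: 0 :: duL n

def altR (m : ℤ) : List (Fin 2) := if 0 ≤ m then udL m.toNat else duL (-m).toNat
def altS (m : ℤ) : List (Fin 2) := if 1 ≤ m then 1 :: udL (m-1).toNat else 0 :: duL (-m).toNat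

/-- canonical reduced alternating word representing an element of `D∞`,
with letter `0 = u ↦ sr 0`, letter `1 = d ↦ sr 1`. -/
def altW : DihedralGroup 0 → List (Fin 2)
  | .r n => altR (zi n)
  | .sr n => altS (zi n)

lemma altW_one : altW 1 = [] := by
  show altR (zi 0) = []
  simp [altR, udL]

lemma la1 (m : ℤ) : altS m = 0 :: altR m ∨ ∃ t, altR m = 0 :: t ∧ altS m = t := by
  rcases le_or_gt 1 m with h | h
  · right
    refine ⟨1 :: udL (m - 1).toNat, ?_, ?_⟩
    · have h1 : m.toNat = (m - 1).toNat + 1 := by omega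
      rw [altR, if_pos (by omega), h1]; rfl
    · rw [altS, if_pos h]
  · left
    rcases le_or_gt m (-1) with h2 | h2
    · rw [altS, if_neg (by omega), altR, if_neg (by omega)]
    · have hm : m = 0 := by omega
      subst hm
      rw [altS, if_neg (by omega), altR, if_pos le_rfl]
      rfl

lemma la2 (m : ℤ) : altR m = 0 :: altS m ∨ ∃ t, altS m = 0 :: t ∧ altR m = t := by
  rcases le_or_gt 1 m with h | h
  · left
    have h1 : m.toNat = (m - 1).toNat + 1 := by omega
    rw [altR, if_pos (by omega), altS, if_pos h, h1]; rfl
  · right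
    refine ⟨duL (-m).toNat, ?_, ?_⟩
    · rw [altS, if_neg (by omega)]
    · rcases le_or_gt m (-1) with h2 | h2
      · rw [altR, if_neg (by omega)]
      · have hm : m = 0 := by omega
        subst hm
        rw [altR, if_pos le_rfl]; rfl

lemma la3 (m : ℤ) : altS (1 + m) = 1 :: altR m ∨ ∃ t, altR m = 1 :: t ∧ altS (1 + m) = t := by
  rcases le_or_gt 0 m with h | h
  · left
    rw [altR, if_pos h, altS, if_pos (by omega)]
    congr 2
    omega
  · right
    refine ⟨0 :: duL (-m - 1).toNat, ?_, ?_⟩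
    · have h1 : (-m).toNat = (-m - 1).toNat + 1 := by omega
      rw [altR, if_neg (by omega), h1]; rfl
    · rw [altS, if_neg (by omega)]
      congr 2
      omega

lemma la4 (m : ℤ) : altR (m - 1) = 1 :: altS m ∨ ∃ t, altS m = 1 :: t ∧ altR (m - 1) = t := by
  rcases le_or_gt 1 m with h | h
  · right
    exact ⟨udL (m - 1).toNat, by rw [altS, if_pos h], by rw [altR, if_pos (by omega)]⟩
  · left
    have h1 : (-(m - 1)).toNat = (-m).toNat + 1 := by omega
    rw [altS, if_neg (by omega), altR, if_neg (by omega), h1]; rfl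

lemma la_u (g : DihedralGroup 0) :
    altW (.sr 0 * g) = 0 :: altW g ∨ ∃ t, altW g = 0 :: t ∧ altW (.sr 0 * g) = t := by
  cases g with
  | r n =>
    rw [sr_mul_r, zero_add]
    exact la1 (zi n)
  | sr n =>
    rw [sr_mul_sr, sub_zero]
    exact la2 (zi n)

lemma la_d (g : DihedralGroup 0) :
    altW (.sr 1 * g) = 1 :: altW g ∨ ∃ t, altW g = 1 :: t ∧ altW (.sr 1 * g) = t := by
  cases g with
  | r n =>
    rw [sr_mul_r]
    have : altW (.sr (1 + n)) = altS (1 + zi n) := rfl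
    rw [this]
    exact la3 (zi n)
  | sr n =>
    rw [sr_mul_sr]
    have : altW (.r (n - 1)) = altR (zi n - 1) := rfl
    rw [this]
    exact la4 (zi n)

section Alg

open DU18 DihedralGroup

variable (k : Type*) [CommRing k]

local notation "U" => DownUp.u k 0 1
local notation "D" => DownUp.d k 0 1
local notation "W" => DownUp.wordVal k 0 1

lemma wv_of (i : Fin 2) :
    W (FreeMonoid.of i) = RingQuot.mkAlgHom k (DownUpRel k 0 1) (ι k i) :=
  FreeMonoid.lift_eval_of _ _

lemma wv_of0 : W (FreeMonoid.of 0) = U := wv_of k 0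
lemma wv_of1 : W (FreeMonoid.of 1) = D := wv_of k 1

lemma wv_cons (i : Fin 2) (l : List (Fin 2)) :
    W (FreeMonoid.ofList (i :: l)) = W (FreeMonoid.of i) * W (FreeMonoid.ofList l) := by
  rw [FreeMonoid.ofList_cons, map_mul]

lemma wv_append (l1 l2 : List (Fin 2)) :
    W (FreeMonoid.ofList (l1 ++ l2)) = W (FreeMonoid.ofList l1) * W (FreeMonoid.ofList l2) := by
  rw [FreeMonoid.ofList_append, map_mul]

lemma rel1' : U * U * D = D * (U * U) := by
  have h := RingQuot.mkAlgHom_rel k (DownUpRel.rel1 (k := k) (a := 0) (b := 1))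
  simp only [map_add, map_smul, map_mul, zero_smul, one_smul, zero_add] at h
  rw [show D * (U * U) = D * U * U by rw [mul_assoc]]
  exact h

lemma rel2' : U * D * D = D * D * U := by
  have h := RingQuot.mkAlgHom_rel k (DownUpRel.rel2 (k := k) (a := 0) (b := 1))
  simp only [map_add, map_smul, map_mul, zero_smul, one_smul, zero_add] at h
  exact h

lemma commute_all {x : DownUp k 0 1} (hu : Commute x U) (hd : Commute x D)
    (z : DownUp k 0 1) : Commute x z := by
  obtain ⟨y, rfl⟩ := RingQuot.mkAlgHom_surjective k (DownUpRel k 0 1) z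
  induction y with
  | grade0 r =>
    rw [AlgHom.commutes]
    exact (Algebra.commutes r x).symm
  | grade1 i =>
    fin_cases i
    · exact hu
    · exact hd
  | mul a b ha hb =>
    rw [map_mul]
    exact ha.mul_right hb
  | add a b ha hb =>
    rw [map_add]
    exact ha.add_right hb

lemma comm_u2 (z : DownUp k 0 1) : Commute (U * U) z :=
  commute_all k ((Commute.refl U).mul_left (Commute.refl U))
    (show (U * U) * D = D * (U * U) from rel1' k) z

lemma comm_d2 (z : DownUp k 0 1) : Commute (D * D) z :=
  commute_all k (show (D * D) * U = U * (D * D) by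
      rw [show U * (D * D) = U * D * D by rw [mul_assoc], rel2' k])
    ((Commute.refl D).mul_left (Commute.refl D)) z

lemma comm_u2a (a : ℕ) (z : DownUp k 0 1) : Commute (U ^ (2 * a)) z := by
  rw [pow_mul, sq]
  exact (comm_u2 k z).pow_left a

lemma comm_d2b (b : ℕ) (z : DownUp k 0 1) : Commute (D ^ (2 * b)) z := by
  rw [pow_mul, sq]
  exact (comm_d2 k z).pow_left b

lemma wv_rep (i : Fin 2) (n : ℕ) :
    W (FreeMonoid.ofList (List.replicate n i)) = W (FreeMonoid.of i) ^ n := by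
  induction n with
  | zero => simp [FreeMonoid.ofList_nil]
  | succ n ih => rw [List.replicate_succ, wv_cons, ih, pow_succ']

/-- normal form word `u^(2a) d^(2b) ⬝ (alternating word of g)` -/
def NW (a b : ℕ) (g : DihedralGroup 0) : FreeMonoid (Fin 2) :=
  FreeMonoid.ofList (List.replicate (2 * a) 0 ++ (List.replicate (2 * b) 1 ++ altW g))

lemma wv_N (a b : ℕ) (g : DihedralGroup 0) :
    W (NW a b g) = U ^ (2 * a) * (D ^ (2 * b) * W (FreeMonoid.ofList (altW g))) := by
  rw [NW, wv_append, wv_append, wv_rep, wv_rep, wv_of0, wv_of1]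

lemma swap_in {M : Type*} [Monoid M] {x y : M} (h : x * y = y * x) (z : M) :
    x * (y * z) = y * (x * z) := by
  rw [← mul_assoc, h, mul_assoc]

end Alg
section PhiLemmas

open DihedralGroup

lemma phi_of0 : phiD8 (FreeMonoid.of 0) = r 1 := by
  rw [phiD8, FreeMonoid.lift_eval_of]; simp

lemma phi_of1 : phiD8 (FreeMonoid.of 1) = sr 0 := by
  rw [phiD8, FreeMonoid.lift_eval_of]; simp

lemma phi_cons (i : Fin 2) (l : List (Fin 2)) :
    phiD8 (FreeMonoid.ofList (i :: l)) = phiD8 (FreeMonoid.of i) * phiD8 (FreeMonoid.ofList l) := by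
  rw [FreeMonoid.ofList_cons, map_mul]

lemma phi_append (l1 l2 : List (Fin 2)) :
    phiD8 (FreeMonoid.ofList (l1 ++ l2)) =
      phiD8 (FreeMonoid.ofList l1) * phiD8 (FreeMonoid.ofList l2) := by
  rw [FreeMonoid.ofList_append, map_mul]

lemma phi_rep0 (n : ℕ) :
    phiD8 (FreeMonoid.ofList (List.replicate n 0)) = r (n : ZMod 4) := by
  induction n with
  | zero => simp [FreeMonoid.ofList_nil]
  | succ n ih =>
    rw [List.replicate_succ, phi_cons, phi_of0, ih, r_mul_r]
    congr 1
    push_cast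
    ring

lemma phi_rep1 (b : ℕ) :
    phiD8 (FreeMonoid.ofList (List.replicate (2 * b) 1)) = 1 := by
  induction b with
  | zero => simp [FreeMonoid.ofList_nil]
  | succ b ih =>
    rw [show 2 * (b + 1) = (2 * b + 1) + 1 by ring, List.replicate_succ, phi_cons, phi_of1,
      List.replicate_succ, phi_cons, phi_of1, ← mul_assoc, sr_mul_sr, ih, mul_one]
    simp

lemma phi_N (a b : ℕ) (g : DihedralGroup 0) :
    phiD8 (NW a b g) = r ((2 * a : ℕ) : ZMod 4) * phiD8 (FreeMonoid.ofList (altW g)) := by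
  rw [NW, phi_append, phi_append, phi_rep0, phi_rep1, one_mul]

lemma two_a_self_neg (a : ℕ) : ((2 * a : ℕ) : ZMod 4) + ((2 * a : ℕ) : ZMod 4) = 0 := by
  have h4 : ((4 : ℕ) : ZMod 4) = 0 := by decide
  push_cast at h4 ⊢
  linear_combination a * h4

lemma r2a_comm (a : ℕ) (x : DihedralGroup 4) :
    r ((2 * a : ℕ) : ZMod 4) * x = x * r ((2 * a : ℕ) : ZMod 4) := by
  cases x with
  | r j => rw [r_mul_r, r_mul_r, add_comm]
  | sr j =>
    rw [r_mul_sr, sr_mul_r]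
    congr 1
    linear_combination -two_a_self_neg a

lemma cnt00 (l : List (Fin 2)) : ((0 :: l) : List (Fin 2)).count 0 = l.count 0 + 1 := by
  simp [List.count_cons]
lemma cnt01 (l : List (Fin 2)) : ((0 :: l) : List (Fin 2)).count 1 = l.count 1 := by
  simp [List.count_cons]
lemma cnt10 (l : List (Fin 2)) : ((1 :: l) : List (Fin 2)).count 0 = l.count 0 := by
  simp [List.count_cons]
lemma cnt11 (l : List (Fin 2)) : ((1 :: l) : List (Fin 2)).count 1 = l.count 1 + 1 := by
  simp [List.count_cons]

end PhiLemmas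

/-- `φ∞` : free monoid to the infinite dihedral group, `u ↦ sr 0`, `d ↦ sr 1`. -/
def phiInf : FreeMonoid (Fin 2) →* DihedralGroup 0 :=
  FreeMonoid.lift fun i => if i = 0 then .sr 0 else .sr 1

lemma phiInf_of0 : phiInf (FreeMonoid.of 0) = DihedralGroup.sr 0 := by
  rw [phiInf, FreeMonoid.lift_eval_of]; simp

lemma phiInf_of1 : phiInf (FreeMonoid.of 1) = DihedralGroup.sr 1 := by
  rw [phiInf, FreeMonoid.lift_eval_of]; simp

section MainLemma

open DihedralGroup

variable (k : Type*) [CommRing k]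

local notation "U" => DownUp.u k 0 1
local notation "D" => DownUp.d k 0 1
local notation "W" => DownUp.wordVal k 0 1

lemma stepW_u (a b : ℕ) (g : DihedralGroup 0) :
    U * W (NW a b g) =
      U ^ (2 * a) * (D ^ (2 * b) * (U * W (FreeMonoid.ofList (altW g)))) := by
  rw [wv_N, swap_in ((comm_u2a k a U).eq).symm, swap_in ((comm_d2b k b U).symm.eq)]

lemma stepW_d (a b : ℕ) (g : DihedralGroup 0) :
    D * W (NW a b g) =
      U ^ (2 * a) * (D ^ (2 * b) * (D * W (FreeMonoid.ofList (altW g)))) := by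
  rw [wv_N, swap_in ((comm_u2a k a D).symm.eq), swap_in (((Commute.refl D).pow_right (2 * b)).eq).symm]

lemma stepP_u (a b : ℕ) (g : DihedralGroup 0) :
    r 1 * phiD8 (NW a b g) =
      r ((2 * a : ℕ) : ZMod 4) * (r 1 * phiD8 (FreeMonoid.ofList (altW g))) := by
  rw [phi_N, swap_in (r2a_comm a (r 1)).symm]

lemma stepP_d (a b : ℕ) (g : DihedralGroup 0) :
    sr 0 * phiD8 (NW a b g) =
      r ((2 * a : ℕ) : ZMod 4) * (sr 0 * phiD8 (FreeMonoid.ofList (altW g))) := by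
  rw [phi_N, swap_in (r2a_comm a (sr 0)).symm]

theorem main_nf (l : List (Fin 2)) :
    ∃ (a b : ℕ) (g : DihedralGroup 0),
      l.count 0 = (altW g).count 0 + 2 * a ∧
      l.count 1 = (altW g).count 1 + 2 * b ∧
      phiInf (FreeMonoid.ofList l) = g ∧
      W (FreeMonoid.ofList l) = W (NW a b g) ∧
      phiD8 (FreeMonoid.ofList l) = phiD8 (NW a b g) := by
  induction l with
  | nil =>
    exact ⟨0, 0, 1, by simp [altW_one], by simp [altW_one], by simp [FreeMonoid.ofList_nil],
      by simp [NW, altW_one, FreeMonoid.ofList_nil], by simp [NW, altW_one, FreeMonoid.ofList_nil]⟩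
  | cons i l ih =>
    obtain ⟨a, b, g, hc0, hc1, hg, hW, hphi⟩ := ih
    fin_cases i
    · -- letter u
      simp only [Fin.zero_eta, Fin.mk_one]
      rcases la_u g with h | ⟨t, ht, h⟩
      · refine ⟨a, b, .sr 0 * g, ?_, ?_, ?_, ?_, ?_⟩
        · rw [cnt00, h, cnt00, hc0]; ring
        · rw [cnt01, h, cnt01, hc1]
        · rw [FreeMonoid.ofList_cons, map_mul, phiInf_of0, hg]
        · rw [wv_cons, wv_of0, hW, stepW_u, wv_N, h, wv_cons, wv_of0]
        · rw [phi_cons, phi_of0, hphi, stepP_u, phi_N, h, phi_cons, phi_of0]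
      · refine ⟨a + 1, b, .sr 0 * g, ?_, ?_, ?_, ?_, ?_⟩
        · rw [cnt00, h, hc0, ht, cnt00]; ring
        · rw [cnt01, h, hc1, ht, cnt01]
        · rw [FreeMonoid.ofList_cons, map_mul, phiInf_of0, hg]
        · rw [wv_cons, wv_of0, hW, stepW_u, ht, wv_cons, wv_of0, wv_N, h,
            show 2 * (a + 1) = 2 * a + 2 by ring, pow_add, sq, mul_assoc, mul_assoc U U,
            swap_in ((comm_d2b k b U).symm.eq), swap_in ((comm_d2b k b U).symm.eq)]
        · rw [phi_cons, phi_of0, hphi, stepP_u, ht, phi_cons, phi_of0, phi_N, h,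
            ← mul_assoc (r 1), r_mul_r, ← mul_assoc, r_mul_r]
          congr 2
          push_cast
          ring
    · -- letter d
      simp only [Fin.zero_eta, Fin.mk_one]
      rcases la_d g with h | ⟨t, ht, h⟩
      · refine ⟨a, b, .sr 1 * g, ?_, ?_, ?_, ?_, ?_⟩
        · rw [cnt10, h, cnt10, hc0]
        · rw [cnt11, h, cnt11, hc1]; ring
        · rw [FreeMonoid.ofList_cons, map_mul, phiInf_of1, hg]
        · rw [wv_cons, wv_of1, hW, stepW_d, wv_N, h, wv_cons, wv_of1]
        · rw [phi_cons, phi_of1, hphi, stepP_d, phi_N, h, phi_cons, phi_of1]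
      · refine ⟨a, b + 1, .sr 1 * g, ?_, ?_, ?_, ?_, ?_⟩
        · rw [cnt10, h, hc0, ht, cnt10]
        · rw [cnt11, h, hc1, ht, cnt11]; ring
        · rw [FreeMonoid.ofList_cons, map_mul, phiInf_of1, hg]
        · rw [wv_cons, wv_of1, hW, stepW_d, ht, wv_cons, wv_of1, wv_N, h,
            show 2 * (b + 1) = 2 * b + 2 by ring, pow_add, sq, mul_assoc (D ^ (2*b)), mul_assoc D D]
        · rw [phi_cons, phi_of1, hphi, stepP_d, ht, phi_cons, phi_of1, phi_N, h,
            ← mul_assoc (sr 0), sr_mul_sr, sub_self, show r (0 : ZMod 4) = 1 from rfl, one_mul]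

end MainLemma
section PsiSection

open DihedralGroup

/-- the group `ℤ × ℤ × D∞` receiving the faithful character of `D(0,1)` -/
abbrev Gr : Type := Multiplicative ℤ × Multiplicative ℤ × DihedralGroup 0

def mu : Gr := (Multiplicative.ofAdd 1, Multiplicative.ofAdd 0, sr 0)
def md : Gr := (Multiplicative.ofAdd 0, Multiplicative.ofAdd 1, sr 1)

lemma mu_rel1 : mu * mu * md = md * mu * mu := by
  simp only [mu, md, Prod.mk_mul_mk, Prod.mk.injEq, sr_mul_sr, r_mul_sr, sr_mul_r]
  refine ⟨by simp [← ofAdd_add], by simp [← ofAdd_add], by decide⟩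

lemma mu_rel2 : mu * md * md = md * md * mu := by
  simp only [mu, md, Prod.mk_mul_mk, Prod.mk.injEq, sr_mul_sr, r_mul_sr, sr_mul_r]
  refine ⟨by simp [← ofAdd_add], by simp [← ofAdd_add], by decide⟩

variable (k : Type*) [CommRing k]

def psiF : FreeAlgebra k (Fin 2) →ₐ[k] MonoidAlgebra k Gr :=
  FreeAlgebra.lift k fun i => MonoidAlgebra.single (if i = 0 then mu else md) 1

lemma psiF_rel : ∀ ⦃x y : FreeAlgebra k (Fin 2)⦄, DownUpRel k 0 1 x y → psiF k x = psiF k y := by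
  intro x y h
  cases h with
  | rel1 =>
    simp only [map_add, map_smul, map_mul, zero_smul, one_smul, zero_add, psiF,
      FreeAlgebra.lift_ι_apply]
    simp [MonoidAlgebra.single_mul_single, mu_rel1]
  | rel2 =>
    simp only [map_add, map_smul, map_mul, zero_smul, one_smul, zero_add, psiF,
      FreeAlgebra.lift_ι_apply]
    simp [MonoidAlgebra.single_mul_single, mu_rel2]

def Psi : DownUp k 0 1 →ₐ[k] MonoidAlgebra k Gr :=
  RingQuot.liftAlgHom k ⟨psiF k, psiF_rel k⟩

lemma Psi_mk (x : FreeAlgebra k (Fin 2)) :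
    Psi k (RingQuot.mkAlgHom k (DownUpRel k 0 1) x) = psiF k x := by
  rw [Psi, RingQuot.liftAlgHom_mkAlgHom_apply]

lemma Psi_U : Psi k (DownUp.u k 0 1) = MonoidAlgebra.single mu 1 := by
  rw [DownUp.u, Psi_mk, psiF, FreeAlgebra.lift_ι_apply, if_pos rfl]

lemma Psi_D : Psi k (DownUp.d k 0 1) = MonoidAlgebra.single md 1 := by
  rw [DownUp.d, Psi_mk, psiF, FreeAlgebra.lift_ι_apply, if_neg (by decide : (1 : Fin 2) ≠ 0)]

lemma Psi_wv (l : List (Fin 2)) :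
    Psi k (DownUp.wordVal k 0 1 (FreeMonoid.ofList l)) =
      MonoidAlgebra.single
        (Multiplicative.ofAdd (l.count 0 : ℤ), Multiplicative.ofAdd (l.count 1 : ℤ),
          phiInf (FreeMonoid.ofList l)) 1 := by
  induction l with
  | nil =>
    rw [FreeMonoid.ofList_nil, map_one, map_one, map_one]
    simp [MonoidAlgebra.one_def]
    rfl
  | cons i l ih =>
    rw [wv_cons, map_mul, ih]
    fin_cases i
    · simp only [Fin.zero_eta, Fin.mk_one]
      rw [wv_of0, Psi_U, MonoidAlgebra.single_mul_single, one_mul]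
      congr 1
      rw [mu, Prod.mk_mul_mk, Prod.mk_mul_mk]
      refine congrArg₂ Prod.mk ?_ (congrArg₂ Prod.mk ?_ ?_)
      · rw [cnt00, ← ofAdd_add]; congr 1; push_cast; ring
      · rw [cnt01, ← ofAdd_add]; congr 1; push_cast; ring
      · rw [FreeMonoid.ofList_cons, map_mul, phiInf_of0]
    · simp only [Fin.zero_eta, Fin.mk_one]
      rw [wv_of1, Psi_D, MonoidAlgebra.single_mul_single, one_mul]
      congr 1
      rw [md, Prod.mk_mul_mk, Prod.mk_mul_mk]
      refine congrArg₂ Prod.mk ?_ (congrArg₂ Prod.mk ?_ ?_)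
      · rw [cnt10, ← ofAdd_add]; congr 1; push_cast; ring
      · rw [cnt11, ← ofAdd_add]; congr 1; push_cast; ring
      · rw [FreeMonoid.ofList_cons, map_mul, phiInf_of1]

/-- linear retraction of `Psi`, defined on group elements via the normal-form word -/
def val : Gr → DownUp k 0 1 := fun m =>
  DownUp.wordVal k 0 1
    (NW ((Multiplicative.toAdd m.1 - ((altW m.2.2).count 0 : ℤ)) / 2).toNat
        ((Multiplicative.toAdd m.2.1 - ((altW m.2.2).count 1 : ℤ)) / 2).toNat m.2.2)

def Phi : MonoidAlgebra k Gr →ₗ[k] DownUp k 0 1 :=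
  (Finsupp.linearCombination k (val k)).comp (MonoidAlgebra.coeffLinearEquiv k).toLinearMap

lemma Phi_single (m : Gr) (c : k) : Phi k (MonoidAlgebra.single m c) = c • val k m :=
  Finsupp.linearCombination_single k (v := val k) c m

lemma Phi_Psi_word (l : List (Fin 2)) :
    Phi k (Psi k (DownUp.wordVal k 0 1 (FreeMonoid.ofList l))) =
      DownUp.wordVal k 0 1 (FreeMonoid.ofList l) := by
  obtain ⟨a, b, g, hc0, hc1, hg, hW, -⟩ := main_nf k l
  rw [Psi_wv, Phi_single, one_smul, val]
  simp only [hg, toAdd_ofAdd]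
  have e0 : (((l.count 0 : ℤ) - ((altW g).count 0 : ℤ)) / 2).toNat = a := by
    rw [hc0]; push_cast; omega
  have e1 : (((l.count 1 : ℤ) - ((altW g).count 1 : ℤ)) / 2).toNat = b := by
    rw [hc1]; push_cast; omega
  rw [e0, e1, ← hW]

lemma span_words :
    Submodule.span k (Set.range fun l : List (Fin 2) =>
      DownUp.wordVal k 0 1 (FreeMonoid.ofList l)) = ⊤ := by
  rw [eq_top_iff]
  rintro z -
  obtain ⟨y, rfl⟩ := RingQuot.mkAlgHom_surjective k (DownUpRel k 0 1) z
  induction y with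
  | grade0 r =>
    rw [AlgHom.commutes, Algebra.algebraMap_eq_smul_one]
    refine Submodule.smul_mem _ r (Submodule.subset_span ⟨[], ?_⟩)
    show DownUp.wordVal k 0 1 (FreeMonoid.ofList []) = 1
    rw [FreeMonoid.ofList_nil, map_one]
  | grade1 i =>
    refine Submodule.subset_span ⟨[i], ?_⟩
    show DownUp.wordVal k 0 1 (FreeMonoid.ofList [i]) = _
    rw [FreeMonoid.ofList_singleton, wv_of]
  | mul x y hx hy =>
    rw [map_mul]
    have hm := Submodule.mul_mem_mul hx hy
    rw [Submodule.span_mul_span] at hm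
    refine Submodule.span_le.mpr ?_ hm
    rintro w ⟨w1, ⟨l1, rfl⟩, w2, ⟨l2, rfl⟩, rfl⟩
    refine Submodule.subset_span ⟨l1 ++ l2, ?_⟩
    show DownUp.wordVal k 0 1 (FreeMonoid.ofList (l1 ++ l2)) = _
    exact wv_append k l1 l2
  | add x y hx hy =>
    rw [map_add]
    exact add_mem hx hy

lemma Phi_Psi (x : DownUp k 0 1) : Phi k (Psi k x) = x := by
  have h : (Phi k).comp (Psi k).toLinearMap = LinearMap.id := by
    apply LinearMap.ext_on (span_words k)
    rintro x ⟨l, rfl⟩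
    simpa using Phi_Psi_word k l
  simpa using LinearMap.congr_fun h x

lemma U_reg (x : DownUp k 0 1) (h : DownUp.u k 0 1 * x = 0) : x = 0 := by
  have h2 : MonoidAlgebra.single mu (1 : k) * Psi k x = 0 := by
    rw [← Psi_U, ← map_mul, h, map_zero]
  have h3 : Psi k x = 0 := by
    have h4 := congrArg (MonoidAlgebra.single (mu⁻¹) (1 : k) * ·) h2
    simpa [← mul_assoc, MonoidAlgebra.single_mul_single, inv_mul_cancel,
      ← MonoidAlgebra.one_def] using h4
  rw [← Phi_Psi k x, h3, map_zero]

end PsiSection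

section AltValues

open DihedralGroup

lemma phi_udL (n : ℕ) :
    phiD8 (FreeMonoid.ofList (udL n)) = if Even n then 1 else sr 3 := by
  induction n with
  | zero => simp [udL, FreeMonoid.ofList_nil]
  | succ n ih =>
    rw [show udL (n + 1) = 0 :: 1 :: udL n from rfl, phi_cons, phi_of0, phi_cons, phi_of1, ih,
      ← mul_assoc, r_mul_sr]
    rcases Nat.even_or_odd n with he | ho
    · rw [if_pos he, if_neg (fun hc => (Nat.even_add_one.mp hc) he), mul_one]
      decide
    · have ho' : ¬ Even n := Nat.not_even_iff_odd.mpr ho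
      rw [if_neg ho', if_pos (Nat.even_add_one.mpr ho'), sr_mul_sr]
      decide

lemma phi_duL (n : ℕ) :
    phiD8 (FreeMonoid.ofList (duL n)) = if Even n then 1 else sr 1 := by
  induction n with
  | zero => simp [duL, FreeMonoid.ofList_nil]
  | succ n ih =>
    rw [show duL (n + 1) = 1 :: 0 :: duL n from rfl, phi_cons, phi_of1, phi_cons, phi_of0, ih,
      ← mul_assoc, sr_mul_r]
    rcases Nat.even_or_odd n with he | ho
    · rw [if_pos he, if_neg (fun hc => (Nat.even_add_one.mp hc) he), mul_one]
      decide
    · have ho' : ¬ Even n := Nat.not_even_iff_odd.mpr ho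
      rw [if_neg ho', if_pos (Nat.even_add_one.mpr ho'), sr_mul_sr]
      decide

lemma phi_altR (m : ℤ) :
    phiD8 (FreeMonoid.ofList (altR m)) = 1 ∨ phiD8 (FreeMonoid.ofList (altR m)) = sr 3 ∨
      phiD8 (FreeMonoid.ofList (altR m)) = sr 1 := by
  rw [altR]
  split_ifs with h
  · rw [phi_udL]; split_ifs with h2
    exacts [Or.inl rfl, Or.inr (Or.inl rfl)]
  · rw [phi_duL]; split_ifs with h2
    exacts [Or.inl rfl, Or.inr (Or.inr rfl)]

lemma phi_altS_pos (m : ℤ) (h : 1 ≤ m) :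
    phiD8 (FreeMonoid.ofList (altS m)) = sr 0 ∨ phiD8 (FreeMonoid.ofList (altS m)) = r 3 := by
  rw [altS, if_pos h, phi_cons, phi_of1, phi_udL]
  split_ifs with h2
  · left; rw [mul_one]
  · right; rw [sr_mul_sr]; decide

lemma phi_altS_neg (m : ℤ) (h : ¬ 1 ≤ m) :
    phiD8 (FreeMonoid.ofList (altS m)) = r 1 ∨ phiD8 (FreeMonoid.ofList (altS m)) = sr 0 := by
  rw [altS, if_neg h, phi_cons, phi_of0, phi_duL]
  split_ifs with h2
  · left; rw [mul_one]
  · right; rw [r_mul_sr]; decide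

lemma phi_alt_ne_r2 (g : DihedralGroup 0) :
    phiD8 (FreeMonoid.ofList (altW g)) ≠ r 2 := by
  cases g with
  | r n =>
    show phiD8 (FreeMonoid.ofList (altR (zi n))) ≠ r 2
    rcases phi_altR (zi n) with h | h | h <;> rw [h] <;> decide
  | sr n =>
    show phiD8 (FreeMonoid.ofList (altS (zi n))) ≠ r 2
    by_cases h1 : 1 ≤ zi n
    · rcases phi_altS_pos (zi n) h1 with h | h <;> rw [h] <;> decide
    · rcases phi_altS_neg (zi n) h1 with h | h <;> rw [h] <;> decide

lemma phi_alt_r1 (g : DihedralGroup 0)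
    (h : phiD8 (FreeMonoid.ofList (altW g)) = r 1) : ∃ t, altW g = 0 :: t := by
  cases g with
  | r n =>
    exfalso
    rcases phi_altR (zi n) with h' | h' | h' <;>
      rw [show phiD8 (FreeMonoid.ofList (altW (DihedralGroup.r n))) =
        phiD8 (FreeMonoid.ofList (altR (zi n))) from rfl, h'] at h <;> exact absurd h (by decide)
  | sr n =>
    by_cases h1 : 1 ≤ zi n
    · exfalso
      rcases phi_altS_pos (zi n) h1 with h' | h' <;>
        rw [show phiD8 (FreeMonoid.ofList (altW (DihedralGroup.sr n))) =
          phiD8 (FreeMonoid.ofList (altS (zi n))) from rfl, h'] at h <;> exact absurd h (by decide)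
    · exact ⟨duL (-(zi n)).toNat, by show altS (zi n) = _; rw [altS, if_neg h1]⟩

end AltValues
end DU18

/-- with `R = D8comp k 1` (the identity component, i.e.
`k[(du)², (ud)², d⁴, u²]`), the `ρ`-component of `D(0,1)` is `u·R` and the
`ρ²`-component is `u²·R`; moreover these are free right `R`-modules of rank 1
generated by `u` and `u²` respectively (left multiplication by `u`, resp. `u²`,
is injective on `R`). -/
theorem D8comp_rho_rhoSq (k : Type*) [Field k] [IsAlgClosed k] [CharZero k] :
    D8comp k (DihedralGroup.r 1) =
      Submodule.map (LinearMap.mulLeft k (DownUp.u k 0 1)) (D8comp k 1) ∧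
    D8comp k (DihedralGroup.r 2) =
      Submodule.map (LinearMap.mulLeft k (DownUp.u k 0 1 ^ 2)) (D8comp k 1) ∧
    (∀ a ∈ D8comp k 1, DownUp.u k 0 1 * a = 0 → a = 0) ∧
    (∀ a ∈ D8comp k 1, DownUp.u k 0 1 ^ 2 * a = 0 → a = 0) := by
  open DU18 DihedralGroup in
  refine ⟨?_, ?_, fun a _ h => U_reg k a h,
    fun a _ h => U_reg k a (U_reg k _ (by rw [← mul_assoc, ← sq]; exact h))⟩
  · -- the ρ-component
    apply le_antisymm
    · rw [D8comp]
      apply Submodule.span_le.mpr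
      rintro z ⟨w, hw, rfl⟩
      obtain ⟨a, b, g, -, -, -, hW, hphi⟩ := main_nf k w.toList
      rw [FreeMonoid.ofList_toList] at hW hphi
      rw [hw] at hphi
      cases a with
      | zero =>
        have hsh : NW 0 b g =
            FreeMonoid.ofList (List.replicate (2*b) 1 ++ altW g) := by
          simp [NW]
        have hphi1 : phiD8 (FreeMonoid.ofList (altW g)) = r 1 := by
          have h2 := hphi.symm
          rw [hsh, phi_append, phi_rep1, one_mul] at h2
          exact h2
        obtain ⟨t, ht⟩ := phi_alt_r1 g hphi1
        have hphit : phiD8 (FreeMonoid.ofList t) = 1 := by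
          rw [ht, phi_cons, phi_of0] at hphi1
          exact mul_left_cancel (hphi1.trans (mul_one (r 1)).symm)
        have hphirest : phiD8 (FreeMonoid.ofList (List.replicate (2*b) 1 ++ t)) = 1 := by
          rw [phi_append, phi_rep1, one_mul, hphit]
        refine Submodule.mem_map.mpr
          ⟨DownUp.wordVal k 0 1 (FreeMonoid.ofList (List.replicate (2*b) 1 ++ t)),
            Submodule.subset_span ⟨FreeMonoid.ofList (List.replicate (2*b) 1 ++ t),
              hphirest, rfl⟩, ?_⟩
        rw [LinearMap.mulLeft_apply, hW, hsh, ht, wv_append, wv_append, wv_cons, wv_of0,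
          wv_rep, wv_of1, swap_in ((comm_d2b k b (DownUp.u k 0 1)).symm.eq)]
      | succ a' =>
        set rest := List.replicate (2*a'+1) 0 ++ (List.replicate (2*b) 1 ++ altW g) with hrest
        have hsh : NW (a'+1) b g = FreeMonoid.ofList (0 :: rest) := by
          rw [NW, show 2*(a'+1) = (2*a'+1)+1 by ring, List.replicate_succ]
          rfl
        have hphi' : phiD8 (FreeMonoid.ofList rest) = 1 := by
          have h2 := hphi.symm
          rw [hsh, phi_cons, phi_of0] at h2
          exact mul_left_cancel (h2.trans (mul_one (r 1)).symm)
        refine Submodule.mem_map.mpr ⟨DownUp.wordVal k 0 1 (FreeMonoid.ofList rest),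
          Submodule.subset_span ⟨FreeMonoid.ofList rest, hphi', rfl⟩, ?_⟩
        rw [LinearMap.mulLeft_apply, hW, hsh, wv_cons, wv_of0]
    · rw [D8comp, D8comp, Submodule.map_span]
      apply Submodule.span_le.mpr
      rintro z ⟨z', ⟨w, hw, rfl⟩, rfl⟩
      apply Submodule.subset_span
      refine ⟨FreeMonoid.of 0 * w, ?_, ?_⟩
      · rw [map_mul, phi_of0, hw, mul_one]
      · rw [map_mul, wv_of0, LinearMap.mulLeft_apply]
  · -- the ρ²-component
    apply le_antisymm
    · rw [D8comp]
      apply Submodule.span_le.mpr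
      rintro z ⟨w, hw, rfl⟩
      obtain ⟨a, b, g, -, -, -, hW, hphi⟩ := main_nf k w.toList
      rw [FreeMonoid.ofList_toList] at hW hphi
      rw [hw] at hphi
      cases a with
      | zero =>
        have hsh : NW 0 b g =
            FreeMonoid.ofList (List.replicate (2*b) 1 ++ altW g) := by
          simp [NW]
        have hphi1 : phiD8 (FreeMonoid.ofList (altW g)) = r 2 := by
          have h2 := hphi.symm
          rw [hsh, phi_append, phi_rep1, one_mul] at h2
          exact h2
        exact absurd hphi1 (phi_alt_ne_r2 g)
      | succ a' =>
        set rest := List.replicate (2*a') 0 ++ (List.replicate (2*b) 1 ++ altW g) with hrest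
        have hsh : NW (a'+1) b g = FreeMonoid.ofList (0 :: 0 :: rest) := by
          rw [NW, show 2*(a'+1) = (2*a')+1+1 by ring, List.replicate_succ, List.replicate_succ]
          rfl
        have hphi' : phiD8 (FreeMonoid.ofList rest) = 1 := by
          have h2 := hphi.symm
          rw [hsh, phi_cons, phi_of0, phi_cons, phi_of0, ← mul_assoc, r_mul_r] at h2
          norm_num at h2
          exact h2
        refine Submodule.mem_map.mpr ⟨DownUp.wordVal k 0 1 (FreeMonoid.ofList rest),
          Submodule.subset_span ⟨FreeMonoid.ofList rest, hphi', rfl⟩, ?_⟩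
        rw [LinearMap.mulLeft_apply, hW, hsh, wv_cons, wv_of0, wv_cons, wv_of0, sq, mul_assoc]
    · rw [D8comp, D8comp, Submodule.map_span]
      apply Submodule.span_le.mpr
      rintro z ⟨z', ⟨w, hw, rfl⟩, rfl⟩
      apply Submodule.subset_span
      refine ⟨FreeMonoid.of 0 * (FreeMonoid.of 0 * w), ?_, ?_⟩
      · rw [map_mul, map_mul, phi_of0, hw, mul_one, r_mul_r]
        norm_num
      · rw [map_mul, map_mul, wv_of0, LinearMap.mulLeft_apply, sq, mul_assoc]
end
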